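/- Let Γ be a G-symmetric graph with G-invariant vertex partition 𝓑 whose quotient graph is the complete graph K_{b+1}, and suppose G(B)^B is 2-transitive for B ∈ 𝓑, with |B| = v. Then one of the following holds: (a) v < b; (b) v = b and the design 𝓓(B) has λ = 0, so t = k = m = r = 1 and Γ is a perfect matching consisting of (v+1 choose 2) disjoint edges; (c) v = k and 𝓓(B) has a single block of size v repeated b = r times; (d) v = b, 2 ≤ k < v, and 𝓓(B) is a symmetric 2-design with no repeated blocks. -/

import Mathlib

open scoped Pointwise
open Matrix Finset

section AuxLemmas

lemma fisher_aux {ι κ : Type*} [Fintype ι] [Fintype κ] [DecidableEq ι] [DecidableEq κ]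
    (P : ι → κ → Prop) [∀ i j, Decidable (P i j)] (r lam : ℕ)
    (hrow : ∀ i, (Finset.univ.filter (fun j => P i j)).card = r)
    (hpair : ∀ i i', i ≠ i' → (Finset.univ.filter (fun j => P i j ∧ P i' j)).card = lam)
    (hlt : lam < r) :
    Fintype.card ι ≤ Fintype.card κ ∧
    (Fintype.card ι = Fintype.card κ →
      ∀ j j' : κ, (∀ i, (P i j ↔ P i j')) → j = j') := by
  classical
  set N : Matrix ι κ ℚ := Matrix.of (fun i j => if P i j then 1 else 0) with hN
  have hM : ∀ i i', (N * Nᵀ) i i' = if i = i' then (r : ℚ) else (lam : ℚ) := by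
    intro i i'
    have h1 : (N * Nᵀ) i i' = ∑ j, (if P i j ∧ P i' j then (1:ℚ) else 0) := by
      rw [Matrix.mul_apply]
      refine Finset.sum_congr rfl fun j _ => ?_
      by_cases h : P i j <;> by_cases h' : P i' j <;> simp [hN, h, h']
    rw [h1, Finset.sum_boole]
    by_cases hii : i = i'
    · subst hii
      have : (fun j => P i j ∧ P i j) = fun j => P i j := by ext j; simp [and_self]
      simp [this, hrow i]
    · rw [if_neg hii, hpair i i' hii]
  have hker : ∀ u : ι → ℚ, (N * Nᵀ).mulVec u = 0 → u = 0 := by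
    intro u hu
    have hrow2 : ∀ i, ∑ i', (N * Nᵀ) i i' * u i' =
        ((r : ℚ) - lam) * u i + (lam : ℚ) * ∑ i', u i' := by
      intro i
      have h2 : ∀ i', (N * Nᵀ) i i' * u i'
          = (if i = i' then ((r:ℚ) - lam) * u i' else 0) + (lam : ℚ) * u i' := by
        intro i'
        rw [hM i i']
        by_cases h : i = i' <;> simp [h] <;> ring
      rw [Finset.sum_congr rfl fun i' _ => h2 i', Finset.sum_add_distrib,
        Finset.sum_ite_eq Finset.univ i (fun i' => ((r:ℚ) - lam) * u i'),
        if_pos (Finset.mem_univ i), ← Finset.mul_sum]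
    have hquad : u ⬝ᵥ (N * Nᵀ).mulVec u =
        ((r : ℚ) - lam) * ∑ i, u i ^ 2 + (lam : ℚ) * (∑ i, u i) ^ 2 := by
      simp only [dotProduct, Matrix.mulVec, dotProduct]
      rw [Finset.sum_congr rfl fun i _ => by rw [hrow2 i]]
      have expand : ∀ i, u i * (((r:ℚ) - lam) * u i + (lam:ℚ) * ∑ i', u i')
          = ((r:ℚ)-lam) * u i^2 + (lam:ℚ) * (u i * ∑ i', u i') := fun i => by ring
      rw [Finset.sum_congr rfl fun i _ => expand i, Finset.sum_add_distrib,
        ← Finset.mul_sum, ← Finset.mul_sum, ← Finset.sum_mul]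
      ring
    rw [hu, dotProduct_zero] at hquad
    have h1 : (0:ℚ) ≤ ∑ i, u i ^ 2 := Finset.sum_nonneg fun i _ => sq_nonneg _
    have h2 : (0:ℚ) ≤ (lam : ℚ) * (∑ i, u i) ^ 2 :=
      mul_nonneg (Nat.cast_nonneg _) (sq_nonneg _)
    have hrl : (0:ℚ) < (r : ℚ) - lam := by
      have : (lam:ℚ) < r := by exact_mod_cast hlt
      linarith
    have hsum0 : ∑ i, u i ^ 2 = 0 := by nlinarith
    funext i
    have := (Finset.sum_eq_zero_iff_of_nonneg (fun i _ => sq_nonneg (u i))).mp hsum0 i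
      (Finset.mem_univ i)
    simpa using pow_eq_zero_iff (two_ne_zero) |>.mp this
  have hinj : Function.Injective ((N * Nᵀ).mulVecLin) := by
    rw [← LinearMap.ker_eq_bot, Submodule.eq_bot_iff]
    intro u hu
    exact hker u hu
  have hcomp : (N * Nᵀ).mulVecLin = N.mulVecLin ∘ₗ (Nᵀ).mulVecLin := Matrix.mulVecLin_mul N Nᵀ
  have hsurj : Function.Surjective (N.mulVecLin) := by
    have hsurjM : Function.Surjective ((N * Nᵀ).mulVecLin) :=
      LinearMap.surjective_of_injective hinj
    rw [hcomp] at hsurjM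
    exact Function.Surjective.of_comp hsurjM
  have hcardle : Fintype.card ι ≤ Fintype.card κ := by
    have h1 : Module.finrank ℚ (ι → ℚ) ≤ Module.finrank ℚ (κ → ℚ) := by
      calc Module.finrank ℚ (ι → ℚ)
          = Module.finrank ℚ (LinearMap.range N.mulVecLin) := by
            rw [LinearMap.range_eq_top.mpr hsurj]; exact (finrank_top ℚ (ι → ℚ)).symm
        _ ≤ Module.finrank ℚ (κ → ℚ) := LinearMap.finrank_range_le _
    simpa [Module.finrank_fintype_fun_eq_card] using h1
  refine ⟨hcardle, fun hcardeq j j' hPjj' => ?_⟩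
  have hfr : Module.finrank ℚ (κ → ℚ) = Module.finrank ℚ (ι → ℚ) := by
    simp [Module.finrank_fintype_fun_eq_card, hcardeq]
  have hNinj : Function.Injective (N.mulVecLin) :=
    (LinearMap.injective_iff_surjective_of_finrank_eq_finrank hfr).mpr hsurj
  have hcols : N.mulVecLin (Pi.single j 1) = N.mulVecLin (Pi.single j' 1) := by
    simp only [Matrix.mulVecLin_apply, Matrix.mulVec_single]
    funext i
    by_cases h : P i j
    · simp [hN, h, (hPjj' i).mp h]
    · have h' : ¬ P i j' := fun hp => h ((hPjj' i).mpr hp)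
      simp [hN, h, h']
  have heq := hNinj hcols
  by_contra hne
  have h0 : (Pi.single j (1:ℚ) : κ → ℚ) j = (Pi.single j' (1:ℚ) : κ → ℚ) j := by rw [heq]
  rw [Pi.single_eq_same, Pi.single_eq_of_ne hne] at h0
  exact one_ne_zero h0

lemma ncard_eq_filter_card {α : Type*} [Fintype α] (S : Set α) [Fintype S] (Q : α → Prop)
    [DecidablePred Q] :
    {a | a ∈ S ∧ Q a}.ncard = (Finset.univ.filter (fun j : S => Q ↑j)).card := by
  classical
  have himg : {a | a ∈ S ∧ Q a} = Subtype.val '' {j : S | Q ↑j} := by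
    ext a
    simp only [Set.mem_setOf_eq, Set.mem_image, Subtype.exists, exists_and_right,
      exists_eq_right]
    exact ⟨fun ⟨h1, h2⟩ => ⟨h1, h2⟩, fun ⟨h1, h2⟩ => ⟨h1, h2⟩⟩
  rw [himg, Set.ncard_image_of_injective _ Subtype.val_injective,
    Set.ncard_eq_toFinset_card']
  congr 1
  ext j
  simp

lemma double_count {ι κ : Type*} [Fintype ι] [Fintype κ]
    (P : ι → κ → Prop) [∀ i j, Decidable (P i j)] (r k : ℕ)
    (hrow : ∀ i, (Finset.univ.filter (fun j => P i j)).card = r)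
    (hcol : ∀ j, (Finset.univ.filter (fun i => P i j)).card = k) :
    Fintype.card ι * r = Fintype.card κ * k := by
  classical
  have hro : ∀ i, ∑ j : κ, (if P i j then 1 else 0) = r := fun i => by
    rw [Finset.sum_boole]; exact_mod_cast hrow i
  have hco : ∀ j, ∑ i : ι, (if P i j then 1 else 0) = k := fun j => by
    rw [Finset.sum_boole]; exact_mod_cast hcol j
  have h1 : ∑ i : ι, ∑ j : κ, (if P i j then 1 else 0) = Fintype.card ι * r := by
    simp [hro, Finset.sum_const, Finset.card_univ, mul_comm]
  have h2 : ∑ j : κ, ∑ i : ι, (if P i j then 1 else 0) = Fintype.card κ * k := by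
    simp [hco, Finset.sum_const, Finset.card_univ, mul_comm]
  rw [← h1, ← h2, Finset.sum_comm]

end AuxLemmas

def IsGSymmetric {V G : Type*} [Group G] [MulAction G V] (Γ : SimpleGraph V) : Prop :=
  (∀ (g : G) (x y : V), Γ.Adj x y → Γ.Adj (g • x) (g • y)) ∧
  (∀ x y : V, ∃ g : G, g • x = y) ∧
  (∀ x₁ y₁ x₂ y₂ : V, Γ.Adj x₁ y₁ → Γ.Adj x₂ y₂ → ∃ g : G, g • x₁ = x₂ ∧ g • y₁ = y₂)

def IsGPartition {V : Type*} (G : Type*) [Group G] [MulAction G V] (𝓑 : Set (Set V)) : Prop :=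
  Setoid.IsPartition 𝓑 ∧ ∀ (g : G), ∀ B ∈ 𝓑, g • B ∈ 𝓑

def BlockAdj {V : Type*} (Γ : SimpleGraph V) (B B' : Set V) : Prop :=
  B ≠ B' ∧ ∃ x ∈ B, ∃ y ∈ B', Γ.Adj x y

/-- with complete quotient `K_{b+1}` and `G(B)^B` 2-transitive, one of:
(a) `v < b`; (b) `v = b`, `λ = 0`, `t = k = m = r = 1` and `Γ` is a perfect matching with
`(v+1 choose 2)` edges; (c) `v = k` and `𝓓(B)` has a single block repeated `b = r` times;
(d) `v = b`, `2 ≤ k < v` and `𝓓(B)` is a symmetric 2-design with no repeated blocks. -/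
theorem stmt6 {V G : Type*} [Fintype V] [Group G] [MulAction G V]
    (Γ : SimpleGraph V) (𝓑 : Set (Set V))
    (hsym : IsGSymmetric (G := G) Γ) (hpart : IsGPartition G 𝓑)
    (v b s m t r k lam : ℕ)
    (hcomplete : ∀ B ∈ 𝓑, ∀ B' ∈ 𝓑, B ≠ B' → BlockAdj Γ B B')
    (hcard : 𝓑.ncard = b + 1) (hb1 : 1 ≤ b)
    (hv : ∀ B ∈ 𝓑, B.ncard = v)
    (h2trans : ∀ B ∈ 𝓑, ∀ x₁ ∈ B, ∀ y₁ ∈ B, ∀ x₂ ∈ B, ∀ y₂ ∈ B, x₁ ≠ y₁ → x₂ ≠ y₂ →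
      ∃ g : G, g • B = B ∧ g • x₁ = x₂ ∧ g • y₁ = y₂)
    (ht1 : 1 ≤ t)
    (ht : ∀ B ∈ 𝓑, ∀ B' ∈ 𝓑, B ≠ B' → ∀ x ∈ B,
      (Γ.neighborSet x ∩ B').ncard = 0 ∨ (Γ.neighborSet x ∩ B').ncard = t)
    (hs : ∀ x : V, (Γ.neighborSet x).ncard = s)
    (hm : ∀ B ∈ 𝓑, ∀ B' ∈ 𝓑, B ≠ B' →
      {e : V × V | e.1 ∈ B ∧ e.2 ∈ B' ∧ Γ.Adj e.1 e.2}.ncard = m)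
    (hk : ∀ B ∈ 𝓑, ∀ B' ∈ 𝓑, B ≠ B' → {x ∈ B | ∃ y ∈ B', Γ.Adj x y}.ncard = k)
    (hr : ∀ B ∈ 𝓑, ∀ x ∈ B, {B' | B' ∈ 𝓑 ∧ B' ≠ B ∧ ∃ y ∈ B', Γ.Adj x y}.ncard = r)
    (hlam : ∀ B ∈ 𝓑, ∀ x ∈ B, ∀ y ∈ B, x ≠ y →
      {B' | B' ∈ 𝓑 ∧ B' ≠ B ∧ (∃ z ∈ B', Γ.Adj x z) ∧ (∃ z ∈ B', Γ.Adj y z)}.ncard = lam)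
    (hsr : s = t * r) (hmk : m = t * k) :
    v < b ∨
    (v = b ∧ lam = 0 ∧ t = 1 ∧ k = 1 ∧ m = 1 ∧ r = 1 ∧
      (∀ x : V, (Γ.neighborSet x).ncard = 1) ∧ Γ.edgeSet.ncard = (v + 1).choose 2) ∨
    (v = k ∧ b = r ∧ ∀ B ∈ 𝓑, ∀ B' ∈ 𝓑, B' ≠ B → ∀ x ∈ B, ∃ y ∈ B', Γ.Adj x y) ∨
    (v = b ∧ 2 ≤ k ∧ k < v ∧ 1 ≤ lam ∧
      ∀ B ∈ 𝓑, ∀ B₁ ∈ 𝓑, ∀ B₂ ∈ 𝓑, B₁ ≠ B → B₂ ≠ B →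
        {x ∈ B | ∃ y ∈ B₁, Γ.Adj x y} = {x ∈ B | ∃ y ∈ B₂, Γ.Adj x y} → B₁ = B₂) := by
  classical
  have hBfin : 𝓑.Finite := Set.toFinite _
  -- two distinct blocks
  obtain ⟨B0, hB0, B1, hB1, hB01⟩ : ∃ B0 ∈ 𝓑, ∃ B1 ∈ 𝓑, B0 ≠ B1 := by
    have h1 : 1 < 𝓑.ncard := by omega
    obtain ⟨a, c, ha, hc, hac⟩ := (Set.one_lt_ncard_iff hBfin).mp h1
    exact ⟨a, ha, c, hc, hac⟩
  obtain ⟨-, x0, hx0B0, y0, hy0B1, hadj0⟩ := hcomplete B0 hB0 B1 hB1 hB01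
  have hv1 : 1 ≤ v := by
    rw [← hv B0 hB0]
    exact (Set.ncard_pos (Set.toFinite _)).mpr ⟨x0, hx0B0⟩
  have hk1 : 1 ≤ k := by
    rw [← hk B0 hB0 B1 hB1 hB01]
    exact (Set.ncard_pos (Set.toFinite _)).mpr ⟨x0, hx0B0, y0, hy0B1, hadj0⟩
  have hkle : k ≤ v := by
    rw [← hk B0 hB0 B1 hB1 hB01, ← hv B0 hB0]
    exact Set.ncard_le_ncard (Set.sep_subset _ _) (Set.toFinite _)
  have hr1 : 1 ≤ r := by
    rw [← hr B0 hB0 x0 hx0B0]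
    exact (Set.ncard_pos (Set.toFinite _)).mpr ⟨B1, hB1, Ne.symm hB01, y0, hy0B1, hadj0⟩
  -- each block is nonempty
  have hBne : ∀ B ∈ 𝓑, B.Nonempty := fun B hB =>
    Set.nonempty_of_ncard_ne_zero (by rw [hv B hB]; omega)
  -- cardinalities of index types
  have cardB : ∀ B ∈ 𝓑, Fintype.card ↥B = v := fun B hB => by
    rw [← Nat.card_eq_fintype_card, Nat.card_coe_set_eq, hv B hB]
  have hSdiff : ∀ B : Set V, {C | C ∈ 𝓑 ∧ C ≠ B} = 𝓑 \ {B} := by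
    intro B; ext C; simp [Set.mem_diff]
  have cardS : ∀ B ∈ 𝓑, Fintype.card ↥{C | C ∈ 𝓑 ∧ C ≠ B} = b := by
    intro B hB
    rw [← Nat.card_eq_fintype_card, Nat.card_coe_set_eq, hSdiff B,
      Set.ncard_diff_singleton_of_mem hB, hcard]
    omega
  -- translation of hr to filter cards
  have hrowcard : ∀ B ∈ 𝓑, ∀ x : ↥B,
      (Finset.univ.filter (fun C : ↥{C | C ∈ 𝓑 ∧ C ≠ B} =>
        ∃ y ∈ (C : Set V), Γ.Adj ↑x y)).card = r := by
    intro B hB x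
    have h1 : {B' | B' ∈ 𝓑 ∧ B' ≠ B ∧ ∃ y ∈ B', Γ.Adj ↑x y}
        = {a | a ∈ {C | C ∈ 𝓑 ∧ C ≠ B} ∧ ∃ y ∈ a, Γ.Adj ↑x y} := by
      ext C; simp only [Set.mem_setOf_eq]; tauto
    have h2 := ncard_eq_filter_card {C | C ∈ 𝓑 ∧ C ≠ B} (fun C => ∃ y ∈ C, Γ.Adj (↑x) y)
    rw [← h1, hr B hB ↑x x.2] at h2
    exact h2.symm
  have hcolcard : ∀ B ∈ 𝓑, ∀ C : ↥{C | C ∈ 𝓑 ∧ C ≠ B},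
      (Finset.univ.filter (fun x : ↥B => ∃ y ∈ (C : Set V), Γ.Adj ↑x y)).card = k := by
    intro B hB C
    have h1 : {x ∈ B | ∃ y ∈ (C : Set V), Γ.Adj x y}
        = {a | a ∈ B ∧ ∃ y ∈ (C : Set V), Γ.Adj a y} := rfl
    have h2 := ncard_eq_filter_card B (fun a => ∃ y ∈ (C : Set V), Γ.Adj a y)
    rw [← h1, hk B hB ↑C C.2.1 (Ne.symm C.2.2)] at h2
    exact h2.symm
  have hpaircard : ∀ B ∈ 𝓑, ∀ x y : ↥B, (x : V) ≠ (y : V) →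
      (Finset.univ.filter (fun C : ↥{C | C ∈ 𝓑 ∧ C ≠ B} =>
        (∃ z ∈ (C : Set V), Γ.Adj ↑x z) ∧ ∃ z ∈ (C : Set V), Γ.Adj ↑y z)).card = lam := by
    intro B hB x y hxy
    have h1 : {B' | B' ∈ 𝓑 ∧ B' ≠ B ∧ (∃ z ∈ B', Γ.Adj ↑x z) ∧ (∃ z ∈ B', Γ.Adj ↑y z)}
        = {a | a ∈ {C | C ∈ 𝓑 ∧ C ≠ B} ∧
            ((∃ z ∈ a, Γ.Adj ↑x z) ∧ ∃ z ∈ a, Γ.Adj ↑y z)} := by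
      ext C; simp only [Set.mem_setOf_eq]; tauto
    have h2 := ncard_eq_filter_card {C | C ∈ 𝓑 ∧ C ≠ B}
      (fun a => (∃ z ∈ a, Γ.Adj (↑x) z) ∧ ∃ z ∈ a, Γ.Adj (↑y) z)
    rw [← h1, hlam B hB ↑x x.2 ↑y y.2 hxy] at h2
    exact h2.symm
  -- v * r = b * k
  have hvrbk : v * r = b * k := by
    have := double_count (ι := ↥B0) (κ := ↥{C | C ∈ 𝓑 ∧ C ≠ B0})
      (fun x C => ∃ y ∈ (C : Set V), Γ.Adj ↑x y) r k
      (hrowcard B0 hB0) (hcolcard B0 hB0)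
    rwa [cardB B0 hB0, cardS B0 hB0] at this
  by_cases hkv : k = v
  · -- case (c)
    have htrace : ∀ B ∈ 𝓑, ∀ B' ∈ 𝓑, B' ≠ B → ∀ x ∈ B, ∃ y ∈ B', Γ.Adj x y := by
      intro B hB B' hB' hne x hx
      have h1 : {x ∈ B | ∃ y ∈ B', Γ.Adj x y} = B := by
        apply Set.eq_of_subset_of_ncard_le (Set.sep_subset _ _) _ (Set.toFinite _)
        rw [hk B hB B' hB' (Ne.symm hne), hv B hB, hkv]
      have hx' : x ∈ {x ∈ B | ∃ y ∈ B', Γ.Adj x y} := h1.symm ▸ hx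
      exact hx'.2
    have hbr : b = r := by
      rw [← hr B0 hB0 x0 hx0B0]
      have h1 : {B' | B' ∈ 𝓑 ∧ B' ≠ B0 ∧ ∃ y ∈ B', Γ.Adj x0 y} = 𝓑 \ {B0} := by
        ext B'
        simp only [Set.mem_setOf_eq, Set.mem_diff, Set.mem_singleton_iff]
        constructor
        · rintro ⟨h1, h2, -⟩; exact ⟨h1, h2⟩
        · rintro ⟨h1, h2⟩; exact ⟨h1, h2, htrace B0 hB0 B' h1 h2 x0 hx0B0⟩
      rw [h1, Set.ncard_diff_singleton_of_mem hB0, hcard]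
      omega
    exact Or.inr (Or.inr (Or.inl ⟨hkv.symm, hbr, htrace⟩))
  · have hklt : k < v := lt_of_le_of_ne hkle hkv
    by_cases hlam0 : lam = 0
    · -- case (a) or (b)
      have hkone : k = 1 := by
        by_contra hk2
        have hk2' : 2 ≤ k := by omega
        have hgt : 1 < {x ∈ B0 | ∃ y ∈ B1, Γ.Adj x y}.ncard := by
          rw [hk B0 hB0 B1 hB1 hB01]; omega
        obtain ⟨x, y, hx, hy, hxy⟩ := (Set.one_lt_ncard_iff (Set.toFinite _)).mp hgt
        have h1 : B1 ∈ {B' | B' ∈ 𝓑 ∧ B' ≠ B0 ∧ (∃ z ∈ B', Γ.Adj x z) ∧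
            (∃ z ∈ B', Γ.Adj y z)} := ⟨hB1, Ne.symm hB01, hx.2, hy.2⟩
        have h2 := hlam B0 hB0 x hx.1 y hy.1 hxy
        rw [hlam0] at h2
        have h4 : 0 < {B' | B' ∈ 𝓑 ∧ B' ≠ B0 ∧ (∃ z ∈ B', Γ.Adj x z) ∧
            (∃ z ∈ B', Γ.Adj y z)}.ncard := (Set.ncard_pos (Set.toFinite _)).mpr ⟨B1, h1⟩
        rw [h2] at h4
        exact absurd h4 (lt_irrefl 0)
      -- t = 1
      have hTt : (Γ.neighborSet x0 ∩ B1).ncard = t := by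
        rcases ht B0 hB0 B1 hB1 hB01 x0 hx0B0 with h | h
        · exfalso
          have : (Γ.neighborSet x0 ∩ B1).Nonempty := ⟨y0, hadj0, hy0B1⟩
          rw [← Set.ncard_pos (Set.toFinite _)] at this
          omega
        · exact h
      have htone : t = 1 := by
        have hle : t ≤ 1 := by
          calc t = (Γ.neighborSet x0 ∩ B1).ncard := hTt.symm
            _ ≤ {z ∈ B1 | ∃ w ∈ B0, Γ.Adj z w}.ncard := by
                refine Set.ncard_le_ncard ?_ (Set.toFinite _)
                rintro z ⟨hz1, hz2⟩
                exact ⟨hz2, x0, hx0B0, (Γ.adj_symm hz1)⟩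
            _ = k := hk B1 hB1 B0 hB0 (Ne.symm hB01)
            _ = 1 := hkone
        omega
      have hbvr : b = v * r := by
        have := hvrbk
        rw [hkone, mul_one] at this
        omega
      by_cases hrone : r = 1
      · -- case (b)
        have hbv : v = b := by rw [hbvr, hrone, mul_one]
        have hsone : s = 1 := by rw [hsr, htone, hrone]
        have hmone : m = 1 := by rw [hmk, htone, hkone]
        have hdeg : ∀ x : V, (Γ.neighborSet x).ncard = 1 := fun x => by
          rw [hs x, hsone]
        -- card V = (b+1) * v
        have hcard𝓑 : Fintype.card ↥𝓑 = b + 1 := by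
          rw [← Nat.card_eq_fintype_card, Nat.card_coe_set_eq, hcard]
        have hcV : Fintype.card V * 1 = (b + 1) * v := by
          have hdc := double_count (ι := V) (κ := ↥𝓑)
            (fun x C => x ∈ (C : Set V)) 1 v ?_ ?_
          · rwa [hcard𝓑] at hdc
          · intro x
            obtain ⟨C, ⟨hC1, hC2⟩, hCu⟩ := hpart.1.2 x
            rw [Finset.card_eq_one]
            refine ⟨⟨C, hC1⟩, ?_⟩
            ext D
            simp only [Finset.mem_filter, Finset.mem_univ, true_and, Finset.mem_singleton]
            constructor
            · intro hxD
              exact Subtype.ext (hCu ↑D ⟨D.2, hxD⟩)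
            · rintro rfl
              exact hC2
          · intro C
            have hfc : Finset.univ.filter (fun x : V => x ∈ (C : Set V))
                = (C : Set V).toFinset := by
              ext z; simp
            rw [hfc, ← Set.ncard_eq_toFinset_card', hv ↑C C.2]
        have hdeg2 : ∀ x : V, Γ.degree x = 1 := by
          intro x
          have h := hdeg x
          rwa [Set.ncard_eq_toFinset_card', ← SimpleGraph.neighborFinset_def,
            SimpleGraph.card_neighborFinset_eq_degree] at h
        have hsumdeg : ∑ x : V, Γ.degree x = Fintype.card V := by
          simp [hdeg2]
        have htwice : 2 * Γ.edgeFinset.card = (v + 1) * v := by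
          rw [← SimpleGraph.sum_degrees_eq_twice_card_edges, hsumdeg]
          rw [mul_one] at hcV
          rw [hcV, ← hbv]
        have hedge : Γ.edgeSet.ncard = (v + 1).choose 2 := by
          rw [← SimpleGraph.coe_edgeFinset, Set.ncard_coe_finset]
          have hch : (v + 1).choose 2 = (v + 1) * v / 2 := by
            rw [Nat.choose_two_right, Nat.add_sub_cancel]
          rw [hch]
          omega
        exact Or.inr (Or.inl ⟨hbv, hlam0, htone, hkone, hmone, hrone, hdeg, hedge⟩)
      · -- r ≥ 2 : v < b
        left
        have hr2 : 2 ≤ r := by omega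
        have h2 : v * 2 ≤ v * r := Nat.mul_le_mul_left v hr2
        omega
    ·
      have hlam1 : 1 ≤ lam := Nat.one_le_iff_ne_zero.mpr hlam0
      have hktwo : 2 ≤ k := by
        by_contra hcon
        have hk1' : k = 1 := by omega
        have hgt : 1 < B0.ncard := by rw [hv B0 hB0]; omega
        obtain ⟨x, y, hx, hy, hxy⟩ := (Set.one_lt_ncard_iff (Set.toFinite _)).mp hgt
        have h2 := hlam B0 hB0 x hx y hy hxy
        have hnem : {B' | B' ∈ 𝓑 ∧ B' ≠ B0 ∧ (∃ z ∈ B', Γ.Adj x z) ∧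
            (∃ z ∈ B', Γ.Adj y z)}.Nonempty :=
          Set.nonempty_of_ncard_ne_zero (by rw [h2]; omega)
        obtain ⟨B', hB'1, hB'2, hthrx, hthry⟩ := hnem
        have hgt2 : 1 < {w ∈ B0 | ∃ u ∈ B', Γ.Adj w u}.ncard :=
          (Set.one_lt_ncard_iff (Set.toFinite _)).mpr
            ⟨x, y, ⟨hx, hthrx⟩, ⟨hy, hthry⟩, hxy⟩
        rw [hk B0 hB0 B' hB'1 (Ne.symm hB'2)] at hgt2
        omega
      have hlr : lam < r := by
        have hTk : {x ∈ B0 | ∃ y ∈ B1, Γ.Adj x y}.ncard = k := hk B0 hB0 B1 hB1 hB01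
        obtain ⟨x, hxT⟩ : {x ∈ B0 | ∃ y ∈ B1, Γ.Adj x y}.Nonempty :=
          Set.nonempty_of_ncard_ne_zero (by rw [hTk]; omega)
        have hTne : {x ∈ B0 | ∃ y ∈ B1, Γ.Adj x y} ≠ B0 := by
          intro h; rw [h, hv B0 hB0] at hTk; omega
        obtain ⟨y, hyB0, hyT⟩ : ∃ y ∈ B0, y ∉ {x ∈ B0 | ∃ y ∈ B1, Γ.Adj x y} := by
          by_contra hcon
          push_neg at hcon
          exact hTne (Set.Subset.antisymm (Set.sep_subset _ _) hcon)
        have hxy : x ≠ y := fun h => hyT (h ▸ hxT)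
        have hsubs : {B' | B' ∈ 𝓑 ∧ B' ≠ B0 ∧ (∃ z ∈ B', Γ.Adj x z) ∧ (∃ z ∈ B', Γ.Adj y z)}
            ⊆ {B' | B' ∈ 𝓑 ∧ B' ≠ B0 ∧ ∃ z ∈ B', Γ.Adj x z} := by
          rintro C ⟨h1, h2, h3, h4⟩; exact ⟨h1, h2, h3⟩
        have hss : {B' | B' ∈ 𝓑 ∧ B' ≠ B0 ∧ (∃ z ∈ B', Γ.Adj x z) ∧ (∃ z ∈ B', Γ.Adj y z)}
            ⊂ {B' | B' ∈ 𝓑 ∧ B' ≠ B0 ∧ ∃ z ∈ B', Γ.Adj x z} := by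
          rw [Set.ssubset_iff_of_subset hsubs]
          refine ⟨B1, ⟨hB1, Ne.symm hB01, hxT.2⟩, ?_⟩
          rintro ⟨-, -, -, hy4⟩
          exact hyT ⟨hyB0, hy4⟩
        have hlt := Set.ncard_lt_ncard hss (Set.toFinite _)
        rwa [hlam B0 hB0 x hxT.1 y hyB0 hxy, hr B0 hB0 x hxT.1] at hlt
      have hfish : ∀ B ∈ 𝓑, v ≤ b ∧ (v = b → ∀ B₁ ∈ 𝓑, ∀ B₂ ∈ 𝓑, B₁ ≠ B → B₂ ≠ B →
          {x ∈ B | ∃ y ∈ B₁, Γ.Adj x y} = {x ∈ B | ∃ y ∈ B₂, Γ.Adj x y} → B₁ = B₂) := by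
        intro B hB
        have hf := fisher_aux (ι := ↥B) (κ := ↥{C | C ∈ 𝓑 ∧ C ≠ B})
          (fun x C => ∃ y ∈ (C : Set V), Γ.Adj ↑x y) r lam (hrowcard B hB)
          (fun x y hxy => hpaircard B hB x y (fun h => hxy (Subtype.ext h))) hlr
        rw [cardB B hB, cardS B hB] at hf
        refine ⟨hf.1, fun hvb B₁ hB₁ B₂ hB₂ hne₁ hne₂ hTeq => ?_⟩
        have heq := hf.2 hvb ⟨B₁, hB₁, hne₁⟩ ⟨B₂, hB₂, hne₂⟩ ?_
        · exact congrArg Subtype.val heq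
        · intro x
          constructor
          · intro hx
            have hmem : (x : V) ∈ {x ∈ B | ∃ y ∈ B₁, Γ.Adj x y} := ⟨x.2, hx⟩
            rw [hTeq] at hmem
            exact hmem.2
          · intro hx
            have hmem : (x : V) ∈ {x ∈ B | ∃ y ∈ B₂, Γ.Adj x y} := ⟨x.2, hx⟩
            rw [← hTeq] at hmem
            exact hmem.2
      rcases lt_or_eq_of_le (hfish B0 hB0).1 with hlt | heq
      · exact Or.inl hlt
      · refine Or.inr (Or.inr (Or.inr ⟨heq, hktwo, hklt, hlam1,
          fun B hB B₁ hB₁ B₂ hB₂ hne₁ hne₂ => (hfish B hB).2 heq B₁ hB₁ B₂ hB₂ hne₁ hne₂⟩))
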